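/- The limit of the inverse system ℝ₊ ← ℝ₊² ← ℝ₊³ ← ⋯, where the map ℝ₊^{n+1} → ℝ₊^n is given by the n×(n+1) matrix whose i-th row is the standard basis vector eᵢ for i < n and whose n-th row is eₙ + eₙ₊₁ (i.e., (x₁,…,xₙ₊₁) ↦ (x₁,…,xₙ₋₁, xₙ + xₙ₊₁)), is linearly homeomorphic to the cone C = {(x, y₁, y₂, …) : yᵢ ≥ 0 for all i and x ≥ Σᵢ yᵢ} ⊆ ℝ₊ × ℝ₊^ℕ, where C carries the topology in which a net converges iff all coordinates x and yᵢ converge. -/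

import Mathlib

/-- The inverse limit of the system `ℝ₊ ← ℝ₊² ← ℝ₊³ ← ⋯` where the bonding map
`ℝ₊^{n+2} → ℝ₊^{n+1}` keeps the first `n` coordinates and adds the last two. -/
def L7 : Set (∀ n : ℕ, Fin (n + 1) → ℝ) :=
  {x | (∀ n i, 0 ≤ x n i) ∧ ∀ (n : ℕ) (i : Fin (n + 1)),
    x n i = if (i : ℕ) = n then x (n + 1) i.castSucc + x (n + 1) (Fin.last (n + 1))
            else x (n + 1) i.castSucc}

/-- The cone `{(x, y₁, y₂, …) : yᵢ ≥ 0, Σᵢ yᵢ ≤ x}`. -/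
def C7 : Set (ℝ × (ℕ → ℝ)) :=
  {p | (∀ i, 0 ≤ p.2 i) ∧ ∀ s : Finset ℕ, ∑ i ∈ s, p.2 i ≤ p.1}

noncomputable def f7 : (∀ n : ℕ, Fin (n + 1) → ℝ) →ₗ[ℝ] ℝ × (ℕ → ℝ) where
  toFun x := (x 0 0, fun n => x (n + 1) ⟨n, by omega⟩)
  map_add' x y := by ext <;> simp
  map_smul' c x := by ext <;> simp

noncomputable def g7 (p : ℝ × (ℕ → ℝ)) : ∀ n : ℕ, Fin (n + 1) → ℝ :=
  fun n i => if (i : ℕ) < n then p.2 i else p.1 - ∑ k ∈ Finset.range n, p.2 k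

lemma stab7 {x} (hx : x ∈ L7) : ∀ (n i : ℕ) (h : i < n) (h2 : i < n + 1),
    x n ⟨i, h2⟩ = x (i + 1) ⟨i, by omega⟩ := by
  intro n
  induction n with
  | zero => intro i h; omega
  | succ m ih =>
    intro i h h2
    rcases Nat.lt_succ_iff_lt_or_eq.mp h with h' | h'
    · have hc := hx.2 m ⟨i, by omega⟩
      rw [if_neg (by simp; omega)] at hc
      have : x (m + 1) ⟨i, h2⟩ = x m ⟨i, by omega⟩ := hc.symm
      rw [this]
      exact ih i h' _
    · subst h'; rfl

lemma tail7 {x} (hx : x ∈ L7) : ∀ n, x n (Fin.last n) =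
    x 0 0 - ∑ k ∈ Finset.range n, x (k + 1) ⟨k, by omega⟩ := by
  intro n
  induction n with
  | zero => simp [Fin.last]
  | succ m ih =>
    have h := hx.2 m (Fin.last m)
    rw [if_pos (by simp [Fin.last])] at h
    have hc : x (m + 1) (Fin.castSucc (Fin.last m)) = x (m + 1) ⟨m, by omega⟩ := rfl
    rw [hc] at h
    rw [Finset.sum_range_succ]
    linarith [ih, h]

theorem stmt7 :
    ∃ (f : (∀ n : ℕ, Fin (n + 1) → ℝ) →ₗ[ℝ] ℝ × (ℕ → ℝ)) (g : ℝ × (ℕ → ℝ) → ∀ n : ℕ, Fin (n + 1) → ℝ),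
      f '' L7 = C7 ∧ Set.InjOn f L7 ∧ ContinuousOn f L7 ∧ ContinuousOn g C7 ∧
      (∀ x ∈ L7, g (f x) = x) ∧ ∀ y ∈ C7, g y ∈ L7 ∧ f (g y) = y := by
  -- basic facts
  have hgf : ∀ x ∈ L7, g7 (f7 x) = x := by
    intro x hx
    funext n i
    show (if (i : ℕ) < n then x ((i : ℕ) + 1) ⟨i, by omega⟩
      else x 0 0 - ∑ k ∈ Finset.range n, x (k + 1) ⟨k, by omega⟩) = x n i
    split_ifs with h
    · have := stab7 hx n i h i.isLt
      rw [← this]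
    · have hi : i = Fin.last n := by
        apply Fin.ext
        simp [Fin.last]
        omega
      rw [hi, tail7 hx n]
  have hgC : ∀ p ∈ C7, g7 p ∈ L7 := by
    intro p hp
    constructor
    · intro n i
      show 0 ≤ if (i : ℕ) < n then p.2 i else p.1 - ∑ k ∈ Finset.range n, p.2 k
      split_ifs with h
      · exact hp.1 i
      · have := hp.2 (Finset.range n)
        linarith
    · intro n i
      show (if (i : ℕ) < n then p.2 i else _) = _
      by_cases h : (i : ℕ) = n
      · rw [if_pos h, if_neg (by omega)]
        show _ = (if (i : ℕ) < n + 1 then p.2 i else _) + (if ((Fin.last (n+1) : Fin (n+2)) : ℕ) < n + 1 then _ else p.1 - ∑ k ∈ Finset.range (n+1), p.2 k)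
        rw [if_pos (by omega), if_neg (by simp [Fin.last]), h, Finset.sum_range_succ]
        ring
      · have h2 : (i : ℕ) < n := by omega
        rw [if_neg h, if_pos h2]
        show _ = if (i : ℕ) < n + 1 then p.2 i else _
        rw [if_pos (by omega)]
  have hfg : ∀ p : ℝ × (ℕ → ℝ), f7 (g7 p) = p := by
    intro p
    have h1 : (f7 (g7 p)).1 = p.1 := by
      show (if (0 : ℕ) < 0 then p.2 0 else p.1 - ∑ k ∈ Finset.range 0, p.2 k) = p.1
      simp
    have h2 : (f7 (g7 p)).2 = p.2 := by
      funext n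
      show (if n < n + 1 then p.2 n else _) = p.2 n
      rw [if_pos (by omega)]
    exact Prod.ext h1 h2
  refine ⟨f7, g7, ?_, ?_, ?_, ?_, hgf, fun p hp => ⟨hgC p hp, hfg p⟩⟩
  · apply Set.Subset.antisymm
    · rintro q ⟨x, hx, rfl⟩
      refine ⟨fun i => hx.1 _ _, fun s => ?_⟩
      obtain ⟨N, hN⟩ := s.exists_nat_subset_range
      have hle : ∑ i ∈ s, (f7 x).2 i ≤ ∑ i ∈ Finset.range N, (f7 x).2 i :=
        Finset.sum_le_sum_of_subset_of_nonneg hN (fun i _ _ => hx.1 _ _)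
      have ht : ∑ i ∈ Finset.range N, (f7 x).2 i = x 0 0 - x N (Fin.last N) := by
        have := tail7 hx N
        show ∑ i ∈ Finset.range N, x (i + 1) ⟨i, by omega⟩ = _
        rw [this]; ring
      have hnn : 0 ≤ x N (Fin.last N) := hx.1 _ _
      show ∑ i ∈ s, (f7 x).2 i ≤ x 0 0
      rw [ht] at hle
      linarith
    · intro p hp
      exact ⟨g7 p, hgC p hp, hfg p⟩
  · intro a ha b hb hab
    rw [← hgf a ha, ← hgf b hb, hab]
  · apply Continuous.continuousOn
    apply Continuous.prodMk
    · exact (continuous_apply (0 : Fin 1)).comp (continuous_apply 0)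
    · exact continuous_pi fun n =>
        (continuous_apply (⟨n, by omega⟩ : Fin (n + 2))).comp (continuous_apply (n + 1))
  · apply Continuous.continuousOn
    apply continuous_pi
    intro n
    apply continuous_pi
    intro i
    show Continuous fun p : ℝ × (ℕ → ℝ) =>
      if (i : ℕ) < n then p.2 i else p.1 - ∑ k ∈ Finset.range n, p.2 k
    by_cases h : (i : ℕ) < n
    · simp only [if_pos h]
      exact (continuous_apply (i : ℕ)).comp continuous_snd
    · simp only [if_neg h]
      exact continuous_fst.sub (continuous_finset_sum _ fun k _ =>
        (continuous_apply k).comp continuous_snd)
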